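/- Let Ω ⊆ ℝ^N be open and E a reflexive Banach space. Let F : Ω × E ⊸ E be a set-valued map satisfying conditions (F1)–(F4). Then for every continuous u : Ω → E there exists a locally Bochner-integrable w : Ω → E with w(x) ∈ F(x,u(x)) for Lebesgue-a.e. x ∈ Ω; that is, the Nemytskii set N_F(u) := {w ∈ L¹_loc(Ω,E) : w(x) ∈ F(x,u(x)) a.e.} is nonempty. -/

import Mathlib

open MeasureTheory Set Filter Metric NormedSpace Topology



/-- Cluster-point workhorse in a reflexive space: a decreasing sequence of nonempty bounded
closed convex sets has a common point at essentially minimal distance from `e`. -/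
theorem refl_iInter {E : Type*} [NormedAddCommGroup E] [NormedSpace ℝ E]
    (hrefl : Function.Surjective (NormedSpace.inclusionInDoubleDual ℝ E))
    (K : ℕ → Set E) (hne : ∀ m, (K m).Nonempty) (hconv : ∀ m, Convex ℝ (K m))
    (hcl : ∀ m, IsClosed (K m)) (hanti : Antitone K)
    (R : ℝ) (hbd : ∀ m, K m ⊆ Metric.closedBall (0 : E) R) (e : E) :
    ∃ y ∈ ⋂ m, K m, ∀ D : ℝ, (∀ m, Metric.infDist e (K m) ≤ D) → dist e y ≤ D := by
  classical
  -- choose near-optimal points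
  have hy : ∀ m : ℕ, ∃ z ∈ K m, dist e z < Metric.infDist e (K m) + 1 / (m + 1) := by
    intro m
    have h1 : (0 : ℝ) < 1 / (m + 1) := by positivity
    exact (Metric.infDist_lt_iff (hne m)).1 (by linarith)
  choose y hyK hyd using hy
  set J := NormedSpace.inclusionInDoubleDual ℝ E with hJ
  have hJnorm : ∀ z : E, ‖J z‖ = ‖z‖ := fun z =>
    (NormedSpace.inclusionInDoubleDualLi ℝ (E := E)).norm_map z
  -- the sequence in the weak dual of the dual
  set ψ : ℕ → WeakDual ℝ (StrongDual ℝ E) := fun m =>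
    StrongDual.toWeakDual (J (y m)) with hψ
  have hRnn : ∀ m, ‖y m‖ ≤ R := fun m => by
    have := hbd m (hyK m); simpa [Metric.mem_closedBall, dist_zero_right] using this
  have hmem : ∀ m, ψ m ∈ (WeakDual.toStrongDual ⁻¹' Metric.closedBall 0 R) := by
    intro m
    simp only [Set.mem_preimage, Metric.mem_closedBall, dist_zero_right]
    have : WeakDual.toStrongDual (ψ m) = J (y m) := rfl
    rw [this]; exact (dist_zero_right (J (y m))).trans_le ((hJnorm (y m)).trans_le (hRnn m))
  have hcompact : IsCompact (WeakDual.toStrongDual ⁻¹' Metric.closedBall (0 : StrongDual ℝ (StrongDual ℝ E)) R) :=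
    WeakDual.isCompact_closedBall 0 R
  have hle : Filter.map ψ Filter.atTop ≤ Filter.principal (WeakDual.toStrongDual ⁻¹' Metric.closedBall 0 R) := by
    rw [Filter.le_principal_iff]
    exact Filter.eventually_atTop.2 ⟨0, fun m _ => hmem m⟩
  obtain ⟨Ψ, -, hΨ⟩ := hcompact.exists_clusterPt hle
  obtain ⟨y₀, hy₀⟩ := hrefl (WeakDual.toStrongDual Ψ)
  -- evaluation cluster points
  have heval : ∀ φ : StrongDual ℝ E,
      ClusterPt (φ y₀) (Filter.map (fun m => φ (y m)) Filter.atTop) := by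
    intro φ
    have hc : ContinuousAt (fun χ : WeakDual ℝ (StrongDual ℝ E) => χ φ) Ψ :=
      (WeakDual.eval_continuous φ).continuousAt
    have hmapeq : Filter.map (fun χ : WeakDual ℝ (StrongDual ℝ E) => χ φ)
        (Filter.map ψ Filter.atTop) = Filter.map (fun m => φ (y m)) Filter.atTop := by
      rw [Filter.map_map]
      rfl
    have := hΨ.map hc (Filter.tendsto_map (f := fun χ : WeakDual ℝ (StrongDual ℝ E) => χ φ))
    rw [hmapeq] at this
    have hval : Ψ φ = φ y₀ := by
      have : WeakDual.toStrongDual Ψ = J y₀ := hy₀.symm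
      calc Ψ φ = (WeakDual.toStrongDual Ψ) φ := rfl
        _ = (J y₀) φ := by rw [this]
        _ = φ y₀ := rfl
    rwa [hval] at this
  -- cluster point of eventually bounded sequence
  have hcluster_le : ∀ (φ : StrongDual ℝ E) (c : ℝ) (M : ℕ),
      (∀ k, M ≤ k → φ (y k) ≤ c) → φ y₀ ≤ c := by
    intro φ c M hk
    have hmem : {t : ℝ | t ≤ c} ∈ Filter.map (fun m => φ (y m)) Filter.atTop :=
      Filter.eventually_atTop.2 ⟨M, fun k hMk => hk k hMk⟩
    have := (clusterPt_iff_forall_mem_closure.1 (heval φ)) _ hmem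
    have hcl : closure {t : ℝ | t ≤ c} = {t : ℝ | t ≤ c} := IsClosed.closure_eq isClosed_Iic
    rw [hcl] at this
    exact this
  have hcluster_ge : ∀ (φ : StrongDual ℝ E) (c : ℝ) (M : ℕ),
      (∀ k, M ≤ k → c ≤ φ (y k)) → c ≤ φ y₀ := by
    intro φ c M hk
    have hmem : {t : ℝ | c ≤ t} ∈ Filter.map (fun m => φ (y m)) Filter.atTop :=
      Filter.eventually_atTop.2 ⟨M, fun k hMk => hk k hMk⟩
    have := (clusterPt_iff_forall_mem_closure.1 (heval φ)) _ hmem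
    have hcl : closure {t : ℝ | c ≤ t} = {t : ℝ | c ≤ t} := IsClosed.closure_eq isClosed_Ici
    rw [hcl] at this
    exact this
  -- y₀ belongs to every K m
  have hy₀mem : ∀ m, y₀ ∈ K m := by
    intro m
    by_contra hnot
    obtain ⟨φ, c, hφ1, hφ2⟩ := geometric_hahn_banach_closed_point (hconv m) (hcl m) hnot
    have : φ y₀ ≤ c := hcluster_le φ c m (fun k hmk => (hφ1 _ (hanti hmk (hyK k))).le)
    linarith
  refine ⟨y₀, Set.mem_iInter.2 hy₀mem, ?_⟩
  intro D hD
  rcases eq_or_ne e y₀ with h | h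
  · rw [h, dist_self]
    exact le_trans Metric.infDist_nonneg (hD 0)
  · obtain ⟨φ, hφnorm, hφval⟩ := exists_dual_vector ℝ (e - y₀) (norm_ne_zero_iff.2 (sub_ne_zero.2 h))
    have hφreval : φ (e - y₀) = ‖e - y₀‖ := by exact_mod_cast hφval
    -- for each m : φ e - D - 1/(m+1) ≤ φ y₀
    have key : ∀ m : ℕ, φ e - D - 1 / (m + 1) ≤ φ y₀ := by
      intro m
      refine hcluster_ge φ _ m (fun k hmk => ?_)
      have h1 : φ (e - y k) ≤ ‖e - y k‖ := by
        calc φ (e - y k) ≤ ‖φ (e - y k)‖ := le_abs_self _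
          _ ≤ ‖φ‖ * ‖e - y k‖ := φ.le_opNorm _
          _ = ‖e - y k‖ := by rw [hφnorm, one_mul]
      have h2 : ‖e - y k‖ < D + 1 / (k + 1) := by
        have := hyd k
        have h3 := hD k
        calc ‖e - y k‖ = dist e (y k) := by rw [dist_eq_norm]
          _ < Metric.infDist e (K k) + 1 / (k + 1) := this
          _ ≤ D + 1 / (k + 1) := by linarith
      have h4 : (1 : ℝ) / (k + 1) ≤ 1 / (m + 1) := by
        apply one_div_le_one_div_of_le (by positivity)
        exact_mod_cast Nat.succ_le_succ hmk
      have hmap : φ (e - y k) = φ e - φ (y k) := φ.map_sub e (y k)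
      have h5 : φ e - φ (y k) < D + 1 / (m + 1) := by
        rw [← hmap]; linarith
      linarith
    have hlim : φ e - D ≤ φ y₀ := by
      by_contra hlt
      push_neg at hlt
      obtain ⟨m, hm⟩ := exists_nat_one_div_lt (show (0:ℝ) < φ e - D - φ y₀ by linarith)
      have := key m
      linarith
    have : dist e y₀ = φ e - φ y₀ := by
      rw [dist_eq_norm, ← hφreval, φ.map_sub]
    linarith

lemma measurable_dite_natFind {X : Type*} [MeasurableSpace X] (A : ℕ → X → Prop)
    [∀ k x, Decidable (A k x)] [∀ x : X, Decidable (∃ k, A k x)] (hA : ∀ k, MeasurableSet {x | A k x}) :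
    Measurable fun x => if h : ∃ k, A k x then Nat.find h else 0 := by
  apply measurable_to_countable'
  intro k
  rcases Nat.eq_zero_or_pos k with hk | hk
  · subst hk
    have : (fun x => if h : ∃ k, A k x then Nat.find h else 0) ⁻¹' {0} =
        {x | A 0 x} ∪ ⋂ j, {x | A j x}ᶜ := by
      ext x
      simp only [mem_preimage, mem_singleton_iff, mem_union, mem_iInter, mem_compl_iff,
        mem_setOf_eq]
      by_cases h : ∃ k, A k x
      · rw [dif_pos h]
        constructor
        · intro h0
          left
          have := Nat.find_spec h
          rwa [h0] at this
        · rintro (h0 | h0)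
          · exact Nat.find_eq_zero h |>.2 h0
          · exact absurd h.choose_spec (h0 _)
      · rw [dif_neg h]
        push_neg at h
        simp [h]
    rw [this]
    exact (hA 0).union (MeasurableSet.iInter fun j => (hA j).compl)
  · have : (fun x => if h : ∃ k, A k x then Nat.find h else 0) ⁻¹' {k} =
        {x | A k x} ∩ ⋂ j : Fin k, {x | A j x}ᶜ := by
      ext x
      simp only [mem_preimage, mem_singleton_iff, mem_inter_iff, mem_iInter, mem_compl_iff,
        mem_setOf_eq]
      by_cases h : ∃ k, A k x
      · rw [dif_pos h]
        rw [Nat.find_eq_iff h]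
        constructor
        · rintro ⟨h1, h2⟩
          exact ⟨h1, fun j => h2 j j.isLt⟩
        · rintro ⟨h1, h2⟩
          exact ⟨h1, fun j hj => h2 ⟨j, hj⟩⟩
      · rw [dif_neg h]
        push_neg at h
        constructor
        · intro h0; omega
        · rintro ⟨h1, -⟩; exact absurd h1 (h k)
    rw [this]
    exact (hA k).inter (MeasurableSet.iInter fun j => (hA j).compl)

lemma StronglyMeasurable.listSum {X E ι : Type*} [MeasurableSpace X] [AddCommMonoid E]
    [TopologicalSpace E] [ContinuousAdd E] (l : List ι) (f : ι → X → E)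
    (hf : ∀ i ∈ l, StronglyMeasurable (f i)) :
    StronglyMeasurable fun x => (l.map fun i => f i x).sum := by
  induction l with
  | nil => simpa using stronglyMeasurable_const
  | cons a l ih =>
    simp only [List.map_cons, List.sum_cons]
    exact (hf a (List.mem_cons_self)).add (ih fun i hi => hf i (List.mem_cons_of_mem a hi))

/-- In a reflexive space, the distance to a decreasing intersection of nonempty bounded closed
convex sets is the supremum of the distances, and the intersection is nonempty. -/
lemma infEDist_iInter_eq {E : Type*} [NormedAddCommGroup E] [NormedSpace ℝ E]
    (hrefl : Function.Surjective (NormedSpace.inclusionInDoubleDual ℝ E))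
    (K : ℕ → Set E) (hne : ∀ m, (K m).Nonempty) (hconv : ∀ m, Convex ℝ (K m))
    (hcl : ∀ m, IsClosed (K m)) (hanti : Antitone K)
    (R : ℝ) (hbd : ∀ m, K m ⊆ Metric.closedBall (0 : E) R) :
    (⋂ m, K m).Nonempty ∧ ∀ c : E,
      Metric.infEDist c (⋂ m, K m) = ⨆ m, Metric.infEDist c (K m) := by
  obtain ⟨y₀, hy₀, -⟩ := refl_iInter hrefl K hne hconv hcl hanti R hbd 0
  refine ⟨⟨y₀, hy₀⟩, fun c => ?_⟩
  refine le_antisymm ?_ (iSup_le fun m => Metric.infEDist_anti (iInter_subset K m))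
  obtain ⟨y, hy, hdist⟩ := refl_iInter hrefl K hne hconv hcl hanti R hbd c
  rcases eq_or_ne (⨆ m, Metric.infEDist c (K m)) ⊤ with htop | htop
  · rw [htop]; exact le_top
  have hD : ∀ m, Metric.infDist c (K m) ≤ (⨆ m, Metric.infEDist c (K m)).toReal := by
    intro m
    rw [Metric.infDist]
    exact ENNReal.toReal_mono htop (le_iSup (fun m => Metric.infEDist c (K m)) m)
  have h1 := hdist _ hD
  calc Metric.infEDist c (⋂ m, K m) ≤ edist c y := Metric.infEDist_le_edist_of_mem hy
    _ = ENNReal.ofReal (dist c y) := by rw [edist_dist]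
    _ ≤ ENNReal.ofReal (⨆ m, Metric.infEDist c (K m)).toReal := ENNReal.ofReal_le_ofReal h1
    _ ≤ ⨆ m, Metric.infEDist c (K m) := ENNReal.ofReal_toReal_le


open Set Filter Topology

section RatCombo

variable {E : Type*} [NormedAddCommGroup E] [NormedSpace ℝ E]

/-- A rational convex combination encoded by a list of (point, weight) pairs. -/
noncomputable def ratCombo (l : List (E × ℚ)) : E :=
  (((l.map Prod.snd).sum : ℚ) : ℝ)⁻¹ • (l.map fun pr => (pr.2 : ℝ) • pr.1).sum

lemma list_map_sum_fin {α M : Type*} [AddCommMonoid M] (l : List α) (f : α → M) :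
    (l.map f).sum = ∑ i : Fin l.length, f (l.get i) := by
  conv_lhs => rw [← List.ofFn_get l, List.map_ofFn, List.sum_ofFn]
  rfl

lemma toList_map_sum {ι M : Type*} [AddCommMonoid M] (t : Finset ι) (f : ι → M) :
    (t.toList.map f).sum = ∑ i ∈ t, f i := by
  rw [Finset.sum, ← Finset.coe_toList t]
  rfl

lemma ratCombo_mem_convexHull {T : Set E} {l : List (E × ℚ)}
    (h1 : ∀ pr ∈ l, pr.1 ∈ T) (h2 : ∀ pr ∈ l, 0 ≤ pr.2)
    (h3 : 0 < (l.map Prod.snd).sum) : ratCombo l ∈ convexHull ℝ T := by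
  classical
  have hcast : (((l.map Prod.snd).sum : ℚ) : ℝ) = ∑ i : Fin l.length, ((l.get i).2 : ℝ) := by
    rw [Rat.cast_list_sum, List.map_map, list_map_sum_fin]
    rfl
  have hsum : (0 : ℝ) < ∑ i : Fin l.length, ((l.get i).2 : ℝ) := by
    rw [← hcast]; exact_mod_cast h3
  have hmem := Finset.centerMass_mem_convexHull (Finset.univ : Finset (Fin l.length))
    (w := fun i => ((l.get i).2 : ℝ)) (z := fun i => (l.get i).1)
    (fun i _ => by
      have := h2 _ (l.get_mem i)
      positivity)
    (by simpa using hsum) (fun i _ => h1 _ (l.get_mem i))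
  have heq : (Finset.univ : Finset (Fin l.length)).centerMass
      (fun i => ((l.get i).2 : ℝ)) (fun i => (l.get i).1) = ratCombo l := by
    rw [Finset.centerMass, ratCombo, hcast]
    congr 1
    rw [list_map_sum_fin]
  rwa [heq] at hmem

lemma convexHull_subset_closure_ratCombo {T c₀ : Set E} (hT : T ⊆ closure c₀) :
    convexHull ℝ T ⊆ closure {p : E | ∃ l : List (E × ℚ), (∀ pr ∈ l, pr.1 ∈ c₀) ∧
      (∀ pr ∈ l, 0 ≤ pr.2) ∧ 0 < (l.map Prod.snd).sum ∧ ratCombo l = p} := by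
  classical
  intro z hz
  rw [convexHull_eq] at hz
  obtain ⟨ι, t, a, zf, ha0, ha1, hzf, hz⟩ := hz
  -- rational approximations of the weights
  have hq : ∀ (i : ι) (j : ℕ), ∃ q : ℚ, a i < (q : ℝ) ∧ (q : ℝ) < a i + 1 / (j + 1) := by
    intro i j
    have h1 : (0:ℝ) < 1 / ((j:ℝ) + 1) := by positivity
    exact exists_rat_btwn (by linarith)
  choose q hq1 hq2 using hq
  -- approximations of the points
  have hz' : ∀ i, i ∈ t → ∀ j : ℕ, ∃ y ∈ c₀, dist (zf i) y < 1 / (j + 1) := by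
    intro i hi j
    exact Metric.mem_closure_iff.1 (hT (hzf i hi)) _ (by positivity)
  set zz : ι → ℕ → E := fun i j => if h : i ∈ t then (hz' i h j).choose else 0 with hzz
  have hzzmem : ∀ i ∈ t, ∀ j, zz i j ∈ c₀ := by
    intro i hi j; simp only [hzz, dif_pos hi]; exact (hz' i hi j).choose_spec.1
  have hzzdist : ∀ i ∈ t, ∀ j : ℕ, dist (zf i) (zz i j) < 1 / (j + 1) := by
    intro i hi j; simp only [hzz, dif_pos hi]; exact (hz' i hi j).choose_spec.2
  set L : ℕ → List (E × ℚ) := fun j => t.toList.map fun i => (zz i j, q i j) with hL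
  have hone : Tendsto (fun j : ℕ => 1 / ((j : ℝ) + 1)) atTop (𝓝 0) :=
    tendsto_one_div_add_atTop_nhds_zero_nat
  -- tendsto of weights
  have hqt : ∀ i ∈ t, Tendsto (fun j => ((q i j : ℝ))) atTop (𝓝 (a i)) := by
    intro i _
    have h0 : Tendsto (fun _ : ℕ => a i) atTop (𝓝 (a i)) := tendsto_const_nhds
    have h1 : Tendsto (fun j : ℕ => a i + 1 / (j + 1)) atTop (𝓝 (a i)) := by
      simpa using h0.add hone
    exact tendsto_of_tendsto_of_tendsto_of_le_of_le h0 h1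
      (fun j => (hq1 i j).le) (fun j => (hq2 i j).le)
  have hzt : ∀ i ∈ t, Tendsto (fun j => zz i j) atTop (𝓝 (zf i)) := by
    intro i hi
    rw [tendsto_iff_dist_tendsto_zero]
    exact squeeze_zero (fun j => dist_nonneg)
      (fun j => by rw [dist_comm]; exact (hzzdist i hi j).le) hone
  -- weight sums (as rationals)
  have hsumL : ∀ j, ((L j).map Prod.snd).sum = ∑ i ∈ t, q i j := by
    intro j
    rw [hL]
    simp only [List.map_map]
    exact toList_map_sum t _
  have hsumpos : ∀ j, (0 : ℝ) < ((∑ i ∈ t, q i j : ℚ) : ℝ) := by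
    intro j
    push_cast
    have : ∑ i ∈ t, a i ≤ ∑ i ∈ t, ((q i j : ℝ)) :=
      Finset.sum_le_sum fun i hi => (hq1 i j).le
    rw [ha1] at this
    linarith
  -- the combos converge to z
  have hS : Tendsto (fun j => ((∑ i ∈ t, q i j : ℚ) : ℝ)) atTop (𝓝 1) := by
    have : Tendsto (fun j => ∑ i ∈ t, ((q i j : ℝ))) atTop (𝓝 (∑ i ∈ t, a i)) :=
      tendsto_finset_sum t fun i hi => hqt i hi
    rw [ha1] at this
    convert this using 2
    push_cast
    rfl
  have hV : Tendsto (fun j => ((L j).map fun pr => (pr.2 : ℝ) • pr.1).sum) atTop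
      (𝓝 (∑ i ∈ t, a i • zf i)) := by
    have heq : ∀ j, ((L j).map fun pr => (pr.2 : ℝ) • pr.1).sum
        = ∑ i ∈ t, (q i j : ℝ) • zz i j := by
      intro j
      rw [hL]
      simp only [List.map_map]
      exact toList_map_sum t _
    simp only [heq]
    exact tendsto_finset_sum t fun i hi => (hqt i hi).smul (hzt i hi)
  have hz2 : ∑ i ∈ t, a i • zf i = z := by
    rw [Finset.centerMass, ha1, inv_one, one_smul] at hz; exact hz
  have hSinv : Tendsto (fun j => ((∑ i ∈ t, q i j : ℚ) : ℝ)⁻¹) atTop (𝓝 1) := by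
    simpa using hS.inv₀ one_ne_zero
  have hcombo : Tendsto (fun j => ratCombo (L j)) atTop (𝓝 z) := by
    have h2 := hSinv.smul hV
    rw [one_smul, hz2] at h2
    convert h2 using 2 with j
    rw [ratCombo, hsumL j]
  apply mem_closure_of_tendsto hcombo
  apply Eventually.of_forall
  intro j
  refine ⟨L j, ?_, ?_, ?_, rfl⟩
  · intro pr hpr
    rw [hL] at hpr
    obtain ⟨i, hi, rfl⟩ := List.mem_map.1 hpr
    exact hzzmem i (Finset.mem_toList.1 hi) j
  · intro pr hpr
    rw [hL] at hpr
    obtain ⟨i, hi, rfl⟩ := List.mem_map.1 hpr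
    have hi' := Finset.mem_toList.1 hi
    have : (0 : ℝ) ≤ (q i j : ℝ) := le_trans (ha0 i hi') (hq1 i j).le
    exact_mod_cast this
  · rw [hsumL j]
    exact_mod_cast hsumpos j

/-- The set of rational combinations drawn from a countable set is countable. -/
lemma countable_ratCombo_set {c₀ : Set E} (h : c₀.Countable) :
    {p : E | ∃ l : List (E × ℚ), (∀ pr ∈ l, pr.1 ∈ c₀) ∧
      (∀ pr ∈ l, 0 ≤ pr.2) ∧ 0 < (l.map Prod.snd).sum ∧ ratCombo l = p}.Countable := by
  classical
  haveI := h.to_subtype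
  apply Set.Countable.mono _
    (Set.countable_range fun l : List (↥c₀ × ℚ) =>
      ratCombo (l.map fun pr => ((pr.1 : E), pr.2)))
  rintro p ⟨l, h1, h2, h3, h4⟩
  refine ⟨l.attach.map fun pr => (⟨pr.1.1, h1 _ pr.2⟩, pr.1.2), ?_⟩
  show ratCombo (List.map _ (List.map _ l.attach)) = p
  rw [List.map_map]
  have heq : (List.map ((fun pr : ↥c₀ × ℚ => ((pr.1 : E), pr.2)) ∘ fun pr : {x // x ∈ l} =>
      ((⟨pr.1.1, h1 _ pr.2⟩ : ↥c₀), pr.1.2)) l.attach) = l := by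
    have h5 : ((fun pr : ↥c₀ × ℚ => ((pr.1 : E), pr.2)) ∘ fun pr : {x // x ∈ l} =>
        ((⟨pr.1.1, h1 _ pr.2⟩ : ↥c₀), pr.1.2)) = fun pr : {x // x ∈ l} => (pr.1.1, pr.1.2) := rfl
    rw [h5]
    have h6 : (fun pr : {x // x ∈ l} => ((pr.1.1, pr.1.2) : E × ℚ)) = fun pr : {x // x ∈ l} => pr.1 := by
      funext pr
      exact Prod.mk.eta
    rw [h6, List.attach_map_subtype_val]
  rw [heq]
  exact h4

end RatCombo


/-- Under conditions (F1)-(F4), for every continuous `u : Ω → E`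
(`E` a reflexive Banach space) the Nemytskii set
`N_F(u) = {w ∈ L¹_loc(Ω,E) : w(x) ∈ F(x,u(x)) a.e.}` is nonempty. -/
theorem stmt_10
    (N : ℕ) {E : Type*} [NormedAddCommGroup E] [NormedSpace ℝ E] [CompleteSpace E]
    -- E reflexive
    (hrefl : Function.Surjective (NormedSpace.inclusionInDoubleDual ℝ E))
    (Ω : Set (Fin N → ℝ)) (hΩ : IsOpen Ω)
    (F : (Fin N → ℝ) → E → Set E)
    -- (F1) nonempty closed convex values
    (hF1 : ∀ x ∈ Ω, ∀ u : E, (F x u).Nonempty ∧ IsClosed (F x u) ∧ Convex ℝ (F x u))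
    -- (F2) F(·,u) has a strongly measurable selection
    (hF2 : ∀ u : E, ∃ s : (Fin N → ℝ) → E, StronglyMeasurable s ∧ ∀ x ∈ Ω, s x ∈ F x u)
    -- (F3) F(x,·) is upper hemicontinuous for a.e. x ∈ Ω
    (hF3 : ∀ᵐ x ∂(volume.restrict Ω), ∀ φ : E →L[ℝ] ℝ,
      UpperSemicontinuous (fun u : E => ⨆ y ∈ F x u, ((φ y : ℝ) : EReal)))
    -- (F4) linear growth with b ∈ L¹_loc(Ω)
    (b : (Fin N → ℝ) → ℝ) (hbmeas : Measurable b)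
    (hbloc : ∀ K ⊆ Ω, IsCompact K → IntegrableOn b K)
    (hF4 : ∀ᵐ x ∂(volume.restrict Ω), ∀ u : E, ∀ y ∈ F x u, ‖y‖ ≤ b x * (1 + ‖u‖)) :
    ∀ u : (Fin N → ℝ) → E, ContinuousOn u Ω →
      ∃ w : (Fin N → ℝ) → E, StronglyMeasurable w ∧
        (∀ K ⊆ Ω, IsCompact K → IntegrableOn w K) ∧
        ∀ᵐ x ∂(volume.restrict Ω), w x ∈ F x (u x) := by
  classical
  intro u hu
  by_cases hΩne : Ω.Nonempty
  swap
  · rw [not_nonempty_iff_eq_empty] at hΩne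
    subst hΩne
    refine ⟨0, stronglyMeasurable_const, fun K hK _ => ?_, by simp⟩
    rw [subset_empty_iff] at hK
    subst hK
    simp [IntegrableOn]
  letI : MeasurableSpace E := borel E
  haveI : BorelSpace E := ⟨rfl⟩
  have hΩm : MeasurableSet Ω := hΩ.measurableSet
  -- STEP 1 : good coverings of Ω on which u varies little
  have hpart : ∀ n : ℕ, ∃ A : ℕ → Set (Fin N → ℝ), ∃ c : ℕ → E,
      (∀ i, IsOpen (A i) ∧ A i ⊆ Ω) ∧ (Ω ⊆ ⋃ i, A i) ∧
      (∀ i x, x ∈ A i → dist (u x) (c i) < 1 / (n + 1)) := by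
    intro n
    set U : (Fin N → ℝ) → Set (Fin N → ℝ) :=
      fun z => Ω ∩ u ⁻¹' Metric.ball (u z) (1 / (n + 1)) with hU
    have hUopen : ∀ z, IsOpen (U z) := fun z =>
      hu.isOpen_inter_preimage hΩ Metric.isOpen_ball
    have hUnhds : ∀ z ∈ Ω, U z ∈ 𝓝[Ω] z := by
      intro z hz
      have hzU : z ∈ U z := ⟨hz, by simp [hU]; positivity⟩
      exact mem_nhdsWithin_of_mem_nhds ((hUopen z).mem_nhds hzU)
    obtain ⟨t, htΩ, htc, hcover⟩ := TopologicalSpace.countable_cover_nhdsWithin hUnhds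
    have htne : t.Nonempty := by
      rcases hΩne with ⟨x, hx⟩
      rcases mem_iUnion₂.1 (hcover hx) with ⟨z, hz, -⟩
      exact ⟨z, hz⟩
    obtain ⟨f, hf⟩ := htc.exists_eq_range htne
    refine ⟨fun i => U (f i), fun i => u (f i), fun i => ⟨hUopen _, inter_subset_left⟩, ?_, ?_⟩
    · intro x hx
      rcases mem_iUnion₂.1 (hcover hx) with ⟨z, hz, hxz⟩
      rw [hf] at hz
      rcases hz with ⟨i, rfl⟩
      exact mem_iUnion.2 ⟨i, hxz⟩
    · intro i x hx
      have := hx.2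
      simpa [hU, dist_comm] using this
  choose A c hAopen hAcover hAdist using hpart
  -- STEP 2 : approximate selections
  choose s hs1 hs2 using hF2
  set idx : ℕ → (Fin N → ℝ) → ℕ :=
    fun n x => if h : ∃ i, x ∈ A n i then Nat.find h else 0 with hidx
  have hidxmeas : ∀ n, Measurable (idx n) := fun n =>
    measurable_dite_natFind _ fun i => (hAopen n i).1.measurableSet
  have hidxmem : ∀ n, ∀ x ∈ Ω, x ∈ A n (idx n x) := by
    intro n x hx
    have h : ∃ i, x ∈ A n i := mem_iUnion.1 (hAcover n hx)
    simp only [hidx, dif_pos h]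
    exact Nat.find_spec h
  set v : ℕ → (Fin N → ℝ) → E := fun n x => c n (idx n x) with hv
  set w : ℕ → (Fin N → ℝ) → E :=
    fun n x => if x ∈ Ω then s (v n x) x else 0 with hw
  have hvdist : ∀ n, ∀ x ∈ Ω, dist (u x) (v n x) < 1 / (n + 1) := fun n x hx =>
    hAdist n (idx n x) x (hidxmem n x hx)
  have hwF : ∀ n, ∀ x ∈ Ω, w n x ∈ F x (v n x) := by
    intro n x hx
    simp only [hw, if_pos hx]
    exact hs2 (v n x) x hx
  have hwmeas : ∀ n, Measurable (w n) := by
    intro n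
    have h1 : Measurable fun p : (Fin N → ℝ) × ℕ => s (c n p.2) p.1 :=
      measurable_from_prod_countable_left fun i => (hs1 (c n i)).measurable
    have h2 : Measurable fun x => s (v n x) x :=
      h1.comp (measurable_id.prodMk (hidxmeas n))
    exact h2.ite hΩm measurable_const
  have hwsm : ∀ n, StronglyMeasurable (w n) := by
    intro n
    rw [stronglyMeasurable_iff_measurable_separable]
    refine ⟨hwmeas n, ?_⟩
    have hsub : range (w n) ⊆ {0} ∪ ⋃ i, range (s (c n i)) := by
      rintro - ⟨x, rfl⟩
      by_cases hx : x ∈ Ω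
      · right
        exact mem_iUnion.2 ⟨idx n x, ⟨x, by simp [hw, if_pos hx]; rfl⟩⟩
      · left
        simp [hw, if_neg hx]
    exact (((countable_singleton (0:E)).isSeparable).union
      (TopologicalSpace.IsSeparable.iUnion fun i => (hs1 (c n i)).isSeparable_range)).mono hsub
  -- STEP 3 : the good set Sg
  have hae := hF3.and hF4
  have hbadnull : (volume.restrict Ω) {x | ¬ ((∀ φ : E →L[ℝ] ℝ,
      UpperSemicontinuous (fun u : E => ⨆ y ∈ F x u, ((φ y : ℝ) : EReal))) ∧
      (∀ u : E, ∀ y ∈ F x u, ‖y‖ ≤ b x * (1 + ‖u‖)))} = 0 := hae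
  rw [Measure.restrict_apply' hΩm] at hbadnull
  obtain ⟨Nb, hNbsub, hNbm, hNb0⟩ := exists_measurable_superset_of_null hbadnull
  set Sg : Set (Fin N → ℝ) := Ω \ Nb with hSg
  have hSgm : MeasurableSet Sg := hΩm.diff hNbm
  have hSgΩ : Sg ⊆ Ω := diff_subset
  have hSgprop : ∀ x ∈ Sg, (∀ φ : E →L[ℝ] ℝ,
      UpperSemicontinuous (fun u : E => ⨆ y ∈ F x u, ((φ y : ℝ) : EReal))) ∧
      (∀ u : E, ∀ y ∈ F x u, ‖y‖ ≤ b x * (1 + ‖u‖)) := by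
    rintro x ⟨hxΩ, hxN⟩
    by_contra hcon
    exact hxN (hNbsub ⟨hcon, hxΩ⟩)
  have hSgae : ∀ᵐ x ∂(volume.restrict Ω), x ∈ Sg := by
    rw [ae_iff, Measure.restrict_apply' hΩm]
    refine measure_mono_null ?_ hNb0
    intro x hx
    simp only [mem_inter_iff, mem_setOf_eq] at hx
    by_contra hxN
    exact hx.1 ⟨hx.2, hxN⟩
  have hb0 : ∀ x ∈ Sg, 0 ≤ b x := by
    intro x hx
    obtain ⟨y, hy⟩ := (hF1 x (hSgΩ hx) (u x)).1
    have h1 := (hSgprop x hx).2 (u x) y hy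
    nlinarith [norm_nonneg y, norm_nonneg (u x)]
  set R : (Fin N → ℝ) → ℝ := fun x => b x * (2 + ‖u x‖) with hR
  have hwR : ∀ x ∈ Sg, ∀ n, ‖w n x‖ ≤ R x := by
    intro x hx n
    have h1 := (hSgprop x hx).2 (v n x) (w n x) (hwF n x (hSgΩ hx))
    have h2 : ‖v n x‖ ≤ ‖u x‖ + 1 := by
      have h3 := hvdist n x (hSgΩ hx)
      have h4 : (1:ℝ) / (n+1) ≤ 1 := by
        rw [div_le_one (by positivity)]
        norm_num
      calc ‖v n x‖ ≤ ‖u x‖ + dist (u x) (v n x) := by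
            rw [dist_eq_norm]
            have := norm_sub_norm_le (u x) (u x - (u x - v n x))
            simp only [sub_sub_cancel] at this
            linarith [norm_sub_norm_le (v n x) (u x), norm_sub_rev (u x) (v n x),
              le_abs_self (‖v n x‖ - ‖u x‖), abs_norm_sub_norm_le (v n x) (u x),
              dist_eq_norm (u x) (v n x)]
        _ ≤ ‖u x‖ + 1 := by linarith
    have hb := hb0 x hx
    calc ‖w n x‖ ≤ b x * (1 + ‖v n x‖) := h1
      _ ≤ b x * (2 + ‖u x‖) := by nlinarith
  -- STEP 4 : tails, hulls, intersection
  set tail : ℕ → (Fin N → ℝ) → Set E := fun m x => {y | ∃ n, m ≤ n ∧ w n x = y} with htail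
  set KK : ℕ → (Fin N → ℝ) → Set E := fun m x => closure (convexHull ℝ (tail m x)) with hKK
  set G : (Fin N → ℝ) → Set E := fun x => ⋂ m, KK m x with hG
  have htailne : ∀ m x, (tail m x).Nonempty := fun m x => ⟨w m x, m, le_rfl, rfl⟩
  have hKne : ∀ m x, (KK m x).Nonempty := fun m x =>
    ⟨w m x, subset_closure (subset_convexHull ℝ _ ⟨m, le_rfl, rfl⟩)⟩
  have hKcl : ∀ m x, IsClosed (KK m x) := fun m x => isClosed_closure
  have hKcv : ∀ m x, Convex ℝ (KK m x) := fun m x => (convex_convexHull ℝ _).closure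
  have hKanti : ∀ x, Antitone fun m => KK m x := by
    intro x m m' hmm'
    exact closure_mono (convexHull_mono fun y ⟨n, hn, hny⟩ => ⟨n, le_trans hmm' hn, hny⟩)
  have hKbd : ∀ x ∈ Sg, ∀ m, KK m x ⊆ Metric.closedBall (0 : E) (R x) := by
    intro x hx m
    apply closure_minimal _ Metric.isClosed_closedBall
    apply convexHull_min _ (convex_closedBall _ _)
    rintro y ⟨n, -, rfl⟩
    simpa [Metric.mem_closedBall, dist_zero_right] using hwR x hx n
  have hGx : ∀ x ∈ Sg, (G x).Nonempty ∧
      ∀ cc : E, Metric.infEDist cc (G x) = ⨆ m, Metric.infEDist cc (KK m x) := by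
    intro x hx
    exact infEDist_iInter_eq hrefl (fun m => KK m x) (fun m => hKne m x) (fun m => hKcv m x)
      (fun m => hKcl m x) (fun _ _ h => hKanti x h) (R x) (hKbd x hx)
  have hGcl : ∀ x, IsClosed (G x) := fun x => isClosed_iInter fun m => hKcl m x
  -- STEP 5 : separable container and dense sequence
  set T : Set E := ⋃ n, range (w n) with hT
  have hTsep : TopologicalSpace.IsSeparable T :=
    TopologicalSpace.IsSeparable.iUnion fun n => (hwsm n).isSeparable_range
  obtain ⟨c₀, hc₀c, hc₀⟩ := hTsep
  set cS : Set E := insert 0 {p : E | ∃ l : List (E × ℚ), (∀ pr ∈ l, pr.1 ∈ c₀) ∧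
      (∀ pr ∈ l, 0 ≤ pr.2) ∧ 0 < (l.map Prod.snd).sum ∧ ratCombo l = p} with hcS
  have hcSc : cS.Countable := (countable_ratCombo_set hc₀c).insert 0
  have hScS : closure (convexHull ℝ T) ⊆ closure cS := by
    apply closure_minimal _ isClosed_closure
    exact (convexHull_subset_closure_ratCombo hc₀).trans
      (closure_mono (subset_insert _ _))
  obtain ⟨ev, hev⟩ := hcSc.exists_eq_range ⟨0, mem_insert _ _⟩
  have hKT : ∀ m x, KK m x ⊆ closure (convexHull ℝ T) := by
    intro m x
    apply closure_mono
    apply convexHull_mono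
    rintro y ⟨n, -, rfl⟩
    exact mem_iUnion.2 ⟨n, mem_range_self x⟩
  have hGev : ∀ x y, y ∈ G x → ∀ ε : ℝ, 0 < ε → ∃ k, dist y (ev k) < ε := by
    intro x y hy ε hε
    have h1 : y ∈ closure cS := hScS (hKT 0 x (mem_iInter.1 hy 0))
    obtain ⟨z, hz, hdz⟩ := Metric.mem_closure_iff.1 h1 ε hε
    rw [hev] at hz
    obtain ⟨k, rfl⟩ := hz
    exact ⟨k, hdz⟩
  -- STEP 6 : rational-combination representation of distances to KK m x
  set p : List (ℕ × ℚ) → (Fin N → ℝ) → E :=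
    fun l x => ratCombo (l.map fun pr => (w pr.1 x, pr.2)) with hp
  have hpsm : ∀ l, StronglyMeasurable (p l) := by
    intro l
    have h1 : p l = fun x => (((l.map Prod.snd).sum : ℚ) : ℝ)⁻¹ •
        (l.map fun pr => ((pr.2 : ℝ) • w pr.1 x)).sum := by
      funext x
      simp only [hp, ratCombo, List.map_map]
      rfl
    rw [h1]
    exact (StronglyMeasurable.listSum l (fun pr y => (pr.2 : ℝ) • w pr.1 y)
      fun pr _ => ((hwsm pr.1).const_smul _)).const_smul _
  have hKdist : ∀ (m : ℕ) (x : Fin N → ℝ) (cc : E),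
      (⨅ l : {l : List (ℕ × ℚ) // (∀ pr ∈ l, m ≤ pr.1) ∧ (∀ pr ∈ l, 0 ≤ pr.2) ∧
        0 < (l.map Prod.snd).sum}, edist cc (p l.1 x)) = Metric.infEDist cc (KK m x) := by
    intro m x cc
    have hmem : ∀ l : {l : List (ℕ × ℚ) // (∀ pr ∈ l, m ≤ pr.1) ∧ (∀ pr ∈ l, 0 ≤ pr.2) ∧
        0 < (l.map Prod.snd).sum}, p l.1 x ∈ KK m x := by
      rintro ⟨l, hl1, hl2, hl3⟩
      apply subset_closure
      apply ratCombo_mem_convexHull (T := tail m x)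
      · rintro pr hpr
        obtain ⟨pr', hpr', rfl⟩ := List.mem_map.1 hpr
        exact ⟨pr'.1, hl1 pr' hpr', rfl⟩
      · rintro pr hpr
        obtain ⟨pr', hpr', rfl⟩ := List.mem_map.1 hpr
        exact hl2 pr' hpr'
      · rw [List.map_map]
        exact hl3
    refine le_antisymm ?_ (le_iInf fun l => Metric.infEDist_le_edist_of_mem (hmem l))
    -- hard direction
    rw [hKK]
    simp only
    rw [Metric.infEDist_closure]
    have hhull : convexHull ℝ (tail m x) ⊆ closure {q : E | ∃ l : List (E × ℚ),
        (∀ pr ∈ l, pr.1 ∈ tail m x) ∧ (∀ pr ∈ l, 0 ≤ pr.2) ∧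
        0 < (l.map Prod.snd).sum ∧ ratCombo l = q} :=
      convexHull_subset_closure_ratCombo subset_closure
    have h2 : (⨅ l : {l : List (ℕ × ℚ) // (∀ pr ∈ l, m ≤ pr.1) ∧ (∀ pr ∈ l, 0 ≤ pr.2) ∧
        0 < (l.map Prod.snd).sum}, edist cc (p l.1 x)) ≤
        Metric.infEDist cc {q : E | ∃ l : List (E × ℚ),
        (∀ pr ∈ l, pr.1 ∈ tail m x) ∧ (∀ pr ∈ l, 0 ≤ pr.2) ∧
        0 < (l.map Prod.snd).sum ∧ ratCombo l = q} := by
      rw [Metric.le_infEDist]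
      rintro q ⟨l, hl1, hl2, hl3, rfl⟩
      -- build an index from l by choosing n's
      have hch : ∀ pr : E × ℚ, pr ∈ l → ∃ n, m ≤ n ∧ w n x = pr.1 := fun pr hpr => hl1 pr hpr
      set l' : List (ℕ × ℚ) := l.attach.map
        (fun pr => ((hch pr.1 pr.2).choose, pr.1.2)) with hl'
      have hl'1 : ∀ pr ∈ l', m ≤ pr.1 := by
        rintro pr hpr
        obtain ⟨pr', -, rfl⟩ := List.mem_map.1 hpr
        exact (hch pr'.1 pr'.2).choose_spec.1
      have hl'2 : ∀ pr ∈ l', 0 ≤ pr.2 := by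
        rintro pr hpr
        obtain ⟨pr', hpr', rfl⟩ := List.mem_map.1 hpr
        exact hl2 pr'.1 pr'.2
      have hmapeq : l'.map (fun pr => (w pr.1 x, pr.2)) = l := by
        rw [hl', List.map_map]
        have : ((fun pr : ℕ × ℚ => (w pr.1 x, pr.2)) ∘
            (fun pr : {pr // pr ∈ l} => ((hch pr.1 pr.2).choose, pr.1.2))) =
            fun pr : {pr // pr ∈ l} => pr.1 := by
          funext pr
          have := (hch pr.1 pr.2).choose_spec.2
          simp only [Function.comp_apply, this]
        rw [this, List.attach_map_subtype_val]
      have hl'3 : 0 < (l'.map Prod.snd).sum := by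
        have h7 : l'.map Prod.snd = l.map Prod.snd := by
          rw [hl', List.map_map]
          have h8 : (Prod.snd ∘ fun pr : {pr // pr ∈ l} => ((hch pr.1 pr.2).choose, pr.1.2)) =
              Prod.snd ∘ (Subtype.val : {pr // pr ∈ l} → E × ℚ) := rfl
          rw [h8, ← List.map_map, List.attach_map_subtype_val]
        rw [h7]
        exact hl3
      have hpeq : p l' x = ratCombo l := congrArg ratCombo hmapeq
      exact iInf_le_of_le ⟨l', hl'1, hl'2, hl'3⟩ (by rw [hpeq])
    refine le_trans h2 ?_
    rw [← Metric.infEDist_closure]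
    exact Metric.infEDist_anti hhull
  -- STEP 7 : measurable distance functions
  set Dk : ℕ → (Fin N → ℝ) → ENNReal := fun k x => ⨆ m,
    ⨅ l : {l : List (ℕ × ℚ) // (∀ pr ∈ l, m ≤ pr.1) ∧ (∀ pr ∈ l, 0 ≤ pr.2) ∧
      0 < (l.map Prod.snd).sum}, edist (ev k) (p l.1 x) with hDk
  have hDkmeas : ∀ k, Measurable (Dk k) := by
    intro k
    apply Measurable.iSup
    intro m
    apply Measurable.iInf
    intro l
    exact (continuous_const.edist continuous_id).measurable.comp (hpsm l.1).measurable
  have hDkeq : ∀ x ∈ Sg, ∀ k, Dk k x = Metric.infEDist (ev k) (G x) := by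
    intro x hx k
    rw [(hGx x hx).2 (ev k), hDk]
    simp only
    congr 1
    funext m
    exact hKdist m x (ev k)
  -- STEP 8 : recursive selection
  set κ : ℕ → ℝ := fun j => (1/2 : ℝ)^j with hκ
  have hκpos : ∀ j, 0 < κ j := fun j => by rw [hκ]; positivity
  set idx2 : ℕ → (Fin N → ℝ) → ℕ := fun j => Nat.rec
    (fun x => if h : ∃ k, Dk k x < ENNReal.ofReal (κ 0) then Nat.find h else 0)
    (fun j prev x => if h : ∃ k, Dk k x < ENNReal.ofReal (κ (j+1)) ∧
      dist (ev k) (ev (prev x)) < κ (j+1) + κ j then Nat.find h else 0) j with hidx2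
  have hidx2zero : ∀ x, idx2 0 x =
      if h : ∃ k, Dk k x < ENNReal.ofReal (κ 0) then Nat.find h else 0 := fun _ => rfl
  have hidx2succ : ∀ j x, idx2 (j+1) x = if h : ∃ k, Dk k x < ENNReal.ofReal (κ (j+1)) ∧
      dist (ev k) (ev (idx2 j x)) < κ (j+1) + κ j then Nat.find h else 0 := fun _ _ => rfl
  have hidx2meas : ∀ j, Measurable (idx2 j) := by
    intro j
    induction j with
    | zero =>
      rw [show idx2 0 = fun x =>
        (if h : ∃ k, Dk k x < ENNReal.ofReal (κ 0) then Nat.find h else 0) from rfl]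
      exact measurable_dite_natFind _ fun k => measurableSet_lt (hDkmeas k) measurable_const
    | succ j ih =>
      rw [show idx2 (j+1) = fun x => (if h : ∃ k, Dk k x < ENNReal.ofReal (κ (j+1)) ∧
        dist (ev k) (ev (idx2 j x)) < κ (j+1) + κ j then Nat.find h else 0) from
        funext (hidx2succ j)]
      apply measurable_dite_natFind
      intro k
      have h1 : MeasurableSet {x : Fin N → ℝ | Dk k x < ENNReal.ofReal (κ (j+1))} :=
        measurableSet_lt (hDkmeas k) measurable_const
      have h2 : MeasurableSet {x : Fin N → ℝ | dist (ev k) (ev (idx2 j x)) < κ (j+1) + κ j} :=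
        measurableSet_lt ((measurable_from_top (f := fun i : ℕ => dist (ev k) (ev i))).comp ih)
          measurable_const
      exact h1.inter h2
  have hGne : ∀ x ∈ Sg, (G x).Nonempty := fun x hx => (hGx x hx).1
  have hfind : ∀ x ∈ Sg, ∀ r : ℝ, 0 < r → ∃ k, Dk k x < ENNReal.ofReal r := by
    intro x hx r hr
    obtain ⟨y, hy⟩ := hGne x hx
    obtain ⟨k, hk⟩ := hGev x y hy r hr
    refine ⟨k, ?_⟩
    rw [hDkeq x hx k]
    calc Metric.infEDist (ev k) (G x) ≤ edist (ev k) y := Metric.infEDist_le_edist_of_mem hy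
      _ < ENNReal.ofReal r := by rw [edist_comm]; exact edist_lt_ofReal.2 hk
  have hexof : ∀ x ∈ Sg, ∀ j, Dk (idx2 j x) x < ENNReal.ofReal (κ j) →
      ∃ k, Dk k x < ENNReal.ofReal (κ (j+1)) ∧
        dist (ev k) (ev (idx2 j x)) < κ (j+1) + κ j := by
    intro x hx j hj
    rw [hDkeq x hx] at hj
    obtain ⟨y, hyG, hyd⟩ := Metric.infEDist_lt_iff.1 hj
    have hyd' : dist (ev (idx2 j x)) y < κ j := edist_lt_ofReal.1 hyd
    obtain ⟨k, hk⟩ := hGev x y hyG (κ (j+1)) (hκpos (j+1))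
    refine ⟨k, ?_, ?_⟩
    · rw [hDkeq x hx k]
      calc Metric.infEDist (ev k) (G x) ≤ edist (ev k) y :=
            Metric.infEDist_le_edist_of_mem hyG
        _ < ENNReal.ofReal (κ (j+1)) := by rw [edist_comm]; exact edist_lt_ofReal.2 hk
    · calc dist (ev k) (ev (idx2 j x)) ≤ dist (ev k) y + dist y (ev (idx2 j x)) :=
            dist_triangle _ _ _
        _ < κ (j+1) + κ j := by
            rw [dist_comm y (ev (idx2 j x))] at *
            rw [dist_comm (ev k) y]
            exact add_lt_add hk hyd'
  have hinv : ∀ x ∈ Sg, ∀ j, Dk (idx2 j x) x < ENNReal.ofReal (κ j) := by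
    intro x hx j
    induction j with
    | zero =>
      have h0 := hfind x hx (κ 0) (hκpos 0)
      rw [hidx2zero x, dif_pos h0]
      exact Nat.find_spec h0
    | succ j ih =>
      have hex := hexof x hx j ih
      rw [hidx2succ j x, dif_pos hex]
      exact (Nat.find_spec hex).1
  have hstep : ∀ x ∈ Sg, ∀ j, dist (ev (idx2 (j+1) x)) (ev (idx2 j x)) < κ (j+1) + κ j := by
    intro x hx j
    have hex := hexof x hx j (hinv x hx j)
    rw [hidx2succ j x, dif_pos hex]
    exact (Nat.find_spec hex).2
  set seq : ℕ → (Fin N → ℝ) → E := fun j x => if x ∈ Sg then ev (idx2 j x) else 0 with hseq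
  have hseqmeas : ∀ j, Measurable (seq j) := fun j =>
    Measurable.ite hSgm ((measurable_from_top (f := ev)).comp (hidx2meas j)) measurable_const
  have hcauchy : ∀ x ∈ Sg, CauchySeq fun j => ev (idx2 j x) := by
    intro x hx
    apply cauchySeq_of_le_geometric (1/2 : ℝ) 3 (by norm_num)
    intro j
    have h1 := hstep x hx j
    rw [dist_comm]
    have h2 : κ (j+1) + κ j ≤ 3 * (1/2)^j := by
      rw [hκ]
      simp only
      rw [pow_succ]
      have : (0:ℝ) ≤ (1/2)^j := by positivity
      nlinarith
    rw [hκ] at h1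
    simp only at h1 h2
    linarith
  set wfun : (Fin N → ℝ) → E :=
    fun x => if x ∈ Sg then limUnder atTop (fun j => ev (idx2 j x)) else 0 with hwfun
  have htendsto : ∀ x ∈ Sg, Tendsto (fun j => ev (idx2 j x)) atTop (𝓝 (wfun x)) := by
    intro x hx
    rw [hwfun]
    simp only [if_pos hx]
    exact (hcauchy x hx).tendsto_limUnder
  have htall : ∀ x, Tendsto (fun j => seq j x) atTop (𝓝 (wfun x)) := by
    intro x
    by_cases hx : x ∈ Sg
    · simp only [hseq, if_pos hx]
      exact htendsto x hx
    · simp only [hseq, hwfun, if_neg hx]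
      exact tendsto_const_nhds
  have hwfunmeas : Measurable wfun :=
    measurable_of_tendsto_metrizable hseqmeas (tendsto_pi_nhds.2 htall)
  have hwfunsm : StronglyMeasurable wfun := by
    rw [stronglyMeasurable_iff_measurable_separable]
    refine ⟨hwfunmeas, ?_⟩
    have hsub : range wfun ⊆ closure (insert 0 (range ev)) := by
      rintro - ⟨x, rfl⟩
      by_cases hx : x ∈ Sg
      · exact closure_mono (subset_insert _ _)
          (mem_closure_of_tendsto (htendsto x hx)
            (Eventually.of_forall fun j => mem_range_self _))
      · rw [hwfun]
        simp only [if_neg hx]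
        exact subset_closure (mem_insert _ _)
    exact (((countable_range ev).insert 0).isSeparable.closure).mono hsub
  have hwG : ∀ x ∈ Sg, wfun x ∈ G x := by
    intro x hx
    rw [← (hGcl x).closure_eq, Metric.mem_closure_iff_infEDist_zero]
    refine le_antisymm ?_ (by simp)
    refine ENNReal.le_of_forall_pos_le_add fun ε hε _ => ?_
    have hεr : (0:ℝ) < (ε : ℝ) / 2 := by positivity
    obtain ⟨J1, hJ1⟩ := (Metric.tendsto_atTop.1 (htendsto x hx)) _ hεr
    obtain ⟨J2, hJ2⟩ := (Metric.tendsto_atTop.1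
      (tendsto_pow_atTop_nhds_zero_of_lt_one (by norm_num : (0:ℝ) ≤ 1/2)
        (by norm_num : (1/2:ℝ) < 1))) _ hεr
    set j := max J1 J2
    have h1 : dist (wfun x) (ev (idx2 j x)) < (ε:ℝ)/2 := by
      rw [dist_comm]; exact hJ1 j (le_max_left _ _)
    have h2 : κ j < (ε:ℝ)/2 := by
      have := hJ2 j (le_max_right _ _)
      rw [Real.dist_eq, sub_zero] at this
      rw [hκ]
      calc (1/2:ℝ)^j ≤ |(1/2:ℝ)^j| := le_abs_self _
        _ < (ε:ℝ)/2 := this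
    calc Metric.infEDist (wfun x) (G x)
        ≤ edist (wfun x) (ev (idx2 j x)) + Metric.infEDist (ev (idx2 j x)) (G x) :=
          Metric.infEDist_le_edist_add_infEDist
      _ ≤ ENNReal.ofReal ((ε:ℝ)/2) + ENNReal.ofReal ((ε:ℝ)/2) := by
          apply add_le_add
          · rw [edist_dist]
            exact ENNReal.ofReal_le_ofReal h1.le
          · rw [← hDkeq x hx]
            exact le_trans (hinv x hx j).le (ENNReal.ofReal_le_ofReal h2.le)
      _ = ENNReal.ofReal ((ε:ℝ)/2 + (ε:ℝ)/2) := (ENNReal.ofReal_add hεr.le hεr.le).symm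
      _ = (ε : ENNReal) := by
          rw [add_halves]
          exact ENNReal.ofReal_coe_nnreal
      _ = 0 + (ε : ENNReal) := (zero_add _).symm
  -- STEP 9 : G x is contained in F x (u x)
  have hGF : ∀ x ∈ Sg, ∀ y ∈ G x, y ∈ F x (u x) := by
    intro x hx y hy
    by_contra hnot
    have hxΩ := hSgΩ hx
    obtain ⟨hFne, hFcl, hFcv⟩ := hF1 x hxΩ (u x)
    obtain ⟨φ, cc, hlt, hcc⟩ := geometric_hahn_banach_closed_point hFcv hFcl hnot
    set θ : ℝ := (cc + φ y) / 2 with hθ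
    have hccθ : cc < θ := by rw [hθ]; linarith
    have hθφ : θ < φ y := by rw [hθ]; linarith
    have hψu : (⨆ z ∈ F x (u x), ((φ z : ℝ) : EReal)) < ((θ : ℝ) : EReal) := by
      refine lt_of_le_of_lt ?_ (EReal.coe_lt_coe_iff.2 hccθ)
      apply iSup₂_le
      intro z hz
      exact EReal.coe_le_coe_iff.2 (hlt z hz).le
    have husc := (hSgprop x hx).1 φ (u x)
    have hev2 : ∀ᶠ vv in 𝓝 (u x), (⨆ z ∈ F x vv, ((φ z : ℝ) : EReal)) < ((θ:ℝ) : EReal) :=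
      husc _ hψu
    have hvt : Tendsto (fun n => v n x) atTop (𝓝 (u x)) := by
      rw [tendsto_iff_dist_tendsto_zero]
      exact squeeze_zero (fun n => dist_nonneg)
        (fun n => by rw [dist_comm]; exact (hvdist n x hxΩ).le)
        tendsto_one_div_add_atTop_nhds_zero_nat
    obtain ⟨n₀, hn₀⟩ := eventually_atTop.1 (hvt.eventually hev2)
    have htailsub : tail n₀ x ⊆ {z : E | φ z ≤ θ} := by
      rintro - ⟨n, hn, rfl⟩
      have h3 := hn₀ n hn
      have h4 : ((φ (w n x) : ℝ) : EReal) ≤ ⨆ z ∈ F x (v n x), ((φ z : ℝ) : EReal) :=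
        le_iSup₂ (f := fun z (_ : z ∈ F x (v n x)) => ((φ z : ℝ) : EReal)) (w n x)
          (hwF n x hxΩ)
      have h5 : ((φ (w n x) : ℝ) : EReal) < ((θ:ℝ) : EReal) := lt_of_le_of_lt h4 h3
      exact (EReal.coe_lt_coe_iff.1 h5).le
    have hKsub : KK n₀ x ⊆ {z : E | φ z ≤ θ} := by
      apply closure_minimal _ (isClosed_le φ.continuous continuous_const)
      exact convexHull_min htailsub
        (convex_halfSpace_le (IsLinearMap.mk φ.map_add φ.map_smul) θ)
    have h6 := hKsub (mem_iInter.1 hy n₀)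
    simp only [mem_setOf_eq] at h6
    linarith
  -- STEP 10 : conclusion
  refine ⟨wfun, hwfunsm, ?_, ?_⟩
  · intro K hKΩ hKc
    have hKm : MeasurableSet K := hKc.measurableSet
    obtain ⟨C, hC⟩ := hKc.exists_bound_of_continuousOn (hu.mono hKΩ)
    have hKSg : ∀ᵐ x ∂(volume.restrict K), x ∈ Sg := by
      rw [ae_iff, Measure.restrict_apply' hKm]
      refine measure_mono_null ?_ hNb0
      rintro x ⟨hxn, hxK⟩
      by_contra hxN
      exact hxn ⟨hKΩ hxK, hxN⟩
    apply Integrable.mono' ((hbloc K hKΩ hKc).mul_const (1 + C))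
    · exact hwfunsm.aestronglyMeasurable
    · filter_upwards [hKSg, ae_restrict_mem hKm] with x hx hxK
      have h1 : wfun x ∈ F x (u x) := hGF x hx _ (hwG x hx)
      have h2 := (hSgprop x hx).2 (u x) _ h1
      have h3 := hC x hxK
      have hb := hb0 x hx
      calc ‖wfun x‖ ≤ b x * (1 + ‖u x‖) := h2
        _ ≤ b x * (1 + C) := by nlinarith
  · filter_upwards [hSgae] with x hx
    exact hGF x hx _ (hwG x hx)
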